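/- Let n ≥ 1, let c₀ ∈ (0,1), and let (A_k)_{k ≥ k₁} be a sequence of nonnegative reals and (a_k) positive reals such that for all k ≥ k₁: A_{k+1} ≤ A_k − c₀·a_k·A_k^{(n−1)/n}, A_k ≥ a_k^n implies this recursion applies, and suppose A_{k₁+1} ≤ (1/nⁿ)(1 − c₀ a_{k₁})ⁿ. If additionally A_k ≥ a_kⁿ for all k in the range, then for every k > k₁: A_k ≤ (1/nⁿ)·(1 − c₀·∑_{j=k₁}^{k−1} a_j)ⁿ. -/

import Mathlib

private lemma rpow_tangent_aux {A B α : ℝ} (hA : 0 < A) (hAB : A ≤ B) (hα0 : 0 ≤ α)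
    (hα1 : α ≤ 1) : B ^ α ≤ A ^ α + α * A ^ (α - 1) * (B - A) := by
  have hB : 0 < B := hA.trans_le hAB
  have hAα : 0 < A ^ α := Real.rpow_pos_of_pos hA α
  have hs : (-1:ℝ) ≤ (B - A) / A := by
    rw [le_div_iff₀ hA]; linarith
  have h := rpow_one_add_le_one_add_mul_self hs hα0 hα1
  have h1 : 1 + (B - A) / A = B / A := by field_simp; ring
  rw [h1] at h
  calc B ^ α = (B / A) ^ α * A ^ α := by
        rw [Real.div_rpow hB.le hA.le, div_mul_cancel₀ _ hAα.ne']
    _ ≤ (1 + α * ((B - A) / A)) * A ^ α := mul_le_mul_of_nonneg_right h hAα.le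
    _ = A ^ α + α * (A ^ α / A) * (B - A) := by field_simp
    _ = A ^ α + α * A ^ (α - 1) * (B - A) := by
        rw [Real.rpow_sub hA, Real.rpow_one]

set_option maxHeartbeats 1000000 in
theorem stmt_8 (n : ℕ) (hn : 1 ≤ n) (c₀ : ℝ) (hc₀ : c₀ ∈ Set.Ioo (0 : ℝ) 1)
    (k₁ : ℕ) (A a : ℕ → ℝ)
    (hA : ∀ k ≥ k₁, 0 ≤ A k)
    (ha : ∀ k ≥ k₁, 0 < a k)
    (hrec : ∀ k ≥ k₁, A (k + 1) ≤ A k - c₀ * a k * (A k) ^ (((n : ℝ) - 1) / n))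
    (hbase : A (k₁ + 1) ≤ (1 / (n : ℝ) ^ n) * (1 - c₀ * a k₁) ^ n)
    (hlow : ∀ k ≥ k₁, (a k) ^ n ≤ A k) :
    ∀ k > k₁, A k ≤ (1 / (n : ℝ) ^ n) * (1 - c₀ * ∑ j ∈ Finset.Ico k₁ k, a j) ^ n := by
  obtain ⟨hc0, hc1⟩ := hc₀
  have ht : (1:ℝ) ≤ (n:ℝ) := by exact_mod_cast hn
  have ht0 : (0:ℝ) < (n:ℝ) := by linarith
  set t : ℝ := (n:ℝ) with htdef
  set α : ℝ := (t - 1) / t with hαdef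
  have hα0 : 0 ≤ α := div_nonneg (by linarith) ht0.le
  have hα1 : α ≤ 1 := by rw [hαdef, div_le_one ht0]; linarith
  intro k hk
  have hk' : k₁ + 1 ≤ k := hk
  induction k, hk' using Nat.le_induction with
  | base =>
    have : Finset.Ico k₁ (k₁ + 1) = {k₁} := by
      rw [Finset.Ico_add_one_right_eq_Icc, Finset.Icc_self]
    rw [this, Finset.sum_singleton]
    exact hbase
  | succ k hk ih =>
    have hk0 : k₁ ≤ k := by omega
    have hak : 0 < a k := ha k hk0
    have hAk : 0 < A k := lt_of_lt_of_le (pow_pos hak _) (hlow k hk0)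
    set S := ∑ j ∈ Finset.Ico k₁ k, a j with hS
    have ihB : A k ≤ 1 / t ^ n * (1 - c₀ * S) ^ n := ih (by omega)
    set B : ℝ := 1 / t ^ n * (1 - c₀ * S) ^ n with hBdef
    rw [Finset.sum_Ico_succ_top hk0]
    have hrecl := hrec k hk0
    have hAα : 0 ≤ (A k) ^ α := Real.rpow_nonneg hAk.le α
    by_cases hpos : 0 < 1 - c₀ * S
    · -- main case
      -- first: n * a k ≤ 1 - c₀ * S
      have hXn : (t * a k) ^ n ≤ (1 - c₀ * S) ^ n := by
        have h1 : t ^ n * (a k ^ n) ≤ t ^ n * A k :=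
          mul_le_mul_of_nonneg_left (hlow k hk0) (by positivity)
        have h2 : t ^ n * A k ≤ (1 - c₀ * S) ^ n := by
          have h3 := mul_le_mul_of_nonneg_left ihB (le_of_lt (show (0:ℝ) < t ^ n by positivity))
          have h4 : t ^ n * B = (1 - c₀ * S) ^ n := by
            rw [hBdef]; field_simp
          linarith
        calc (t * a k) ^ n = t ^ n * a k ^ n := mul_pow t (a k) n
          _ ≤ (1 - c₀ * S) ^ n := le_trans h1 h2
      have hfrac : t * a k ≤ 1 - c₀ * S :=
        le_of_pow_le_pow_left₀ (by omega) hpos.le hXn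
      set u : ℝ := (1 - c₀ * S) / t with hudef
      have hu : 0 < u := div_pos hpos ht0
      have hau : a k ≤ u := by
        rw [hudef, le_div_iff₀ ht0]; nlinarith
      have hBu : B = u ^ n := by
        rw [hBdef, hudef, div_pow]; ring
      have hBα : B ^ α = u ^ (t - 1) := by
        rw [hBu, ← Real.rpow_natCast u n, ← htdef, ← Real.rpow_mul hu.le]
        congr 1
        rw [hαdef]; field_simp
      -- monotone step: A (k+1) ≤ B - c₀ * a k * B ^ α
      have hAB : A k ≤ B := ihB
      have htang := rpow_tangent_aux hAk hAB hα0 hα1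
      have hkey : c₀ * a k * (A k) ^ (α - 1) * α ≤ 1 := by
        have hα1' : α - 1 = -(1 / t) := by rw [hαdef]; field_simp; ring
        have haA : a k ≤ (A k) ^ ((1:ℝ) / t) := by
          have h5 : (a k) ^ (t : ℝ) ≤ A k := by
            rw [htdef, Real.rpow_natCast]; exact hlow k hk0
          have h6 := Real.rpow_le_rpow (by positivity) h5 (by positivity : (0:ℝ) ≤ 1 / t)
          rwa [← Real.rpow_mul hak.le, mul_one_div, div_self ht0.ne', Real.rpow_one] at h6
        have hApow : 0 < (A k) ^ ((1:ℝ) / t) := Real.rpow_pos_of_pos hAk _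
        have h7 : a k * (A k) ^ (α - 1) ≤ 1 := by
          rw [hα1', Real.rpow_neg hAk.le, ← div_eq_mul_inv, div_le_one hApow]
          exact haA
        have h8 : 0 ≤ a k * (A k) ^ (α - 1) :=
          mul_nonneg hak.le (Real.rpow_nonneg hAk.le _)
        calc c₀ * a k * (A k) ^ (α - 1) * α = c₀ * (a k * (A k) ^ (α - 1)) * α := by ring
          _ ≤ 1 * 1 * 1 := by
            apply mul_le_mul (mul_le_mul hc1.le h7 h8 zero_le_one) hα1 hα0
            norm_num
          _ = 1 := by norm_num
      have hstep : A (k + 1) ≤ B - c₀ * a k * B ^ α := by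
        have t1 : c₀ * a k * (B ^ α - (A k) ^ α) ≤
            c₀ * a k * (α * (A k) ^ (α - 1) * (B - A k)) := by
          apply mul_le_mul_of_nonneg_left (by linarith) (by positivity)
        have t3 : (c₀ * a k * (A k) ^ (α - 1) * α) * (B - A k) ≤ 1 * (B - A k) :=
          mul_le_mul_of_nonneg_right hkey (by linarith)
        nlinarith [hrecl]
      -- Bernoulli step
      set b : ℝ := c₀ * a k with hbdef
      have hb0 : 0 < b := mul_pos hc0 hak
      have hbu : b ≤ u := by
        calc b = c₀ * a k := hbdef
          _ ≤ 1 * a k := mul_le_mul_of_nonneg_right hc1.le hak.le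
          _ = a k := one_mul _
          _ ≤ u := hau
      have hs2 : (-2:ℝ) ≤ -(b / (t * u)) := by
        have : b / (t * u) ≤ 1 := by
          rw [div_le_one (by positivity)]
          nlinarith
        linarith
      have hbern := one_add_mul_le_pow hs2 n
      have hmul := mul_le_mul_of_nonneg_right hbern (pow_nonneg hu.le n)
      have he1 : (1 + -(b / (t * u))) ^ n * u ^ n = (u - b / t) ^ n := by
        rw [← mul_pow]
        congr 1
        field_simp
        ring
      have he2 : (1 + (n:ℝ) * -(b / (t * u))) * u ^ n = u ^ n - b * u ^ (t - 1) := by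
        have hun : (u : ℝ) ^ n = u ^ (t : ℝ) := by
          rw [htdef, Real.rpow_natCast]
        have hut : u ^ (t - 1) = u ^ (t:ℝ) / u := by
          rw [Real.rpow_sub hu, Real.rpow_one]
        have h9 : (n:ℝ) * -(b / (t * u)) = -(b / u) := by
          rw [← htdef]; field_simp
        have h10 : (1 + -(b / u)) * u ^ (t:ℝ) = u ^ (t:ℝ) - b * (u ^ (t:ℝ) / u) := by
          ring
        rw [h9, hun, hut]
        exact h10
      have hfin : u ^ n - b * u ^ (t - 1) ≤ (u - b / t) ^ n := by
        rw [← he1, ← he2]; exact hmul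
      have htarget : (u - b / t) ^ n = 1 / t ^ n * (1 - c₀ * (S + a k)) ^ n := by
        have : u - b / t = (1 - c₀ * (S + a k)) / t := by
          rw [hudef, hbdef, div_sub_div_same]
          congr 1
          ring
        rw [this, div_pow]; ring
      calc A (k + 1) ≤ B - b * B ^ α := hstep
        _ = u ^ n - b * u ^ (t - 1) := by rw [hBα, hBu]
        _ ≤ (u - b / t) ^ n := hfin
        _ = 1 / t ^ n * (1 - c₀ * (S + a k)) ^ n := htarget
    · -- degenerate case : 1 - c₀ * S ≤ 0
      push_neg at hpos
      have hBpos : 0 < (1 - c₀ * S) ^ n := by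
        by_contra hX
        push_neg at hX
        have h1 : (0:ℝ) < 1 / t ^ n := by positivity
        have : B ≤ 0 := mul_nonpos_of_nonneg_of_nonpos h1.le hX
        linarith [hAk.trans_le ihB]
      rcases Nat.even_or_odd n with he | ho
      · have hca : 0 < c₀ * a k := mul_pos hc0 hak
        have h2 : 1 - c₀ * (S + a k) ≤ 0 := by linarith
        have h3 : (1 - c₀ * S) ^ n ≤ (1 - c₀ * (S + a k)) ^ n := by
          rw [← he.pow_abs (1 - c₀ * S), ← he.pow_abs (1 - c₀ * (S + a k))]
          apply pow_le_pow_left₀ (abs_nonneg _)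
          rw [abs_of_nonpos hpos, abs_of_nonpos h2]
          linarith
        have h4 : A (k + 1) ≤ A k := by
          linarith [mul_nonneg (mul_nonneg hc0.le hak.le) hAα]
        calc A (k + 1) ≤ B := h4.trans ihB
          _ ≤ 1 / t ^ n * (1 - c₀ * (S + a k)) ^ n := by
            apply mul_le_mul_of_nonneg_left h3 (by positivity)
      · exfalso
        have := ho.pow_nonpos hpos
        linarith
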